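/- Let U be a finite set of size n ≥ 2, let b ≥ 3 be a natural number, and let 𝒳 be a nonempty finite family of functions f : U → {1,…,b} that is pairwise independent, meaning that for all distinct u, v ∈ U and all i, j ∈ {1,…,b}, the number of f ∈ 𝒳 with f(u) = i and f(v) = j equals |𝒳| / b². Then for every subset T ⊆ U with |T| = p, there exists f ∈ 𝒳 such that for every i ∈ {1,…,b}: | |f⁻¹(i)| − n/b | ≤ √n · b and | |f⁻¹(i) ∩ T| − p/b | ≤ √n · b. -/

import Mathlib

open Finset

lemma var_le {V : Type*} [DecidableEq V] (S : Finset V) (𝒳 : Finset (V → ℕ)) (b i : ℕ)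
    (hb : 1 ≤ b)
    (hmarg : ∀ u ∈ S, b * (𝒳.filter fun f => f u = i).card = 𝒳.card)
    (hpair : ∀ u ∈ S, ∀ v ∈ S, u ≠ v →
      b ^ 2 * (𝒳.filter (fun f => f u = i ∧ f v = i)).card = 𝒳.card) :
    ∑ f ∈ 𝒳, (((S.filter fun u => f u = i).card : ℝ) - (S.card : ℝ) / b) ^ 2
      ≤ (𝒳.card : ℝ) * S.card / b := by
  rcases S.eq_empty_or_nonempty with rfl | hS
  · simp
  have hA : b * ∑ f ∈ 𝒳, (S.filter fun u => f u = i).card = S.card * 𝒳.card := by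
    have h1 : ∑ f ∈ 𝒳, (S.filter fun u => f u = i).card
        = ∑ u ∈ S, (𝒳.filter fun f => f u = i).card := by
      simp only [card_filter]
      rw [Finset.sum_comm]
    rw [h1, Finset.mul_sum, Finset.sum_congr rfl hmarg, Finset.sum_const, smul_eq_mul]
  have hB : b ^ 2 * ∑ f ∈ 𝒳, ((S.filter fun u => f u = i).card) ^ 2
      = S.card * (b * 𝒳.card) + S.card * ((S.card - 1) * 𝒳.card) := by
    have h1 : ∀ f : V → ℕ, ((S.filter fun u => f u = i).card) ^ 2
        = ∑ u ∈ S, ∑ v ∈ S, (if f u = i ∧ f v = i then 1 else 0) := by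
      intro f
      rw [card_filter, sq, Finset.sum_mul_sum]
      refine Finset.sum_congr rfl fun u _ => Finset.sum_congr rfl fun v _ => ?_
      split_ifs with h1 h2 h3 <;> simp_all
    have h2 : ∑ f ∈ 𝒳, ((S.filter fun u => f u = i).card) ^ 2
        = ∑ u ∈ S, ∑ v ∈ S, (𝒳.filter (fun f => f u = i ∧ f v = i)).card := by
      simp only [h1]
      rw [Finset.sum_comm]
      refine Finset.sum_congr rfl fun u _ => ?_
      rw [Finset.sum_comm]
      refine Finset.sum_congr rfl fun v _ => ?_
      rw [card_filter]
    rw [h2, Finset.mul_sum]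
    have h3 : ∀ u ∈ S, b ^ 2 * ∑ v ∈ S, (𝒳.filter (fun f => f u = i ∧ f v = i)).card
        = b * 𝒳.card + (S.card - 1) * 𝒳.card := by
      intro u hu
      rw [← Finset.add_sum_erase _ _ hu, mul_add, Finset.mul_sum]
      congr 1
      · have : (𝒳.filter (fun f => f u = i ∧ f u = i)) = 𝒳.filter (fun f => f u = i) := by
          simp
        rw [this, sq, mul_assoc, hmarg u hu]
      · rw [Finset.sum_congr rfl (fun v hv => hpair u hu v (Finset.mem_of_mem_erase hv)
          (Ne.symm (Finset.ne_of_mem_erase hv))), Finset.sum_const, smul_eq_mul,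
          Finset.card_erase_of_mem hu]
    rw [Finset.sum_congr rfl h3, Finset.sum_const, smul_eq_mul, mul_add]
  have hs1 : 1 ≤ S.card := Finset.card_pos.mpr hS
  set s : ℝ := (S.card : ℝ) with hsdef
  set N : ℝ := (𝒳.card : ℝ) with hNdef
  have hbR : (1:ℝ) ≤ (b:ℝ) := by exact_mod_cast hb
  have hb0 : (b:ℝ) ≠ 0 := by linarith
  have hs0 : (1:ℝ) ≤ s := by rw [hsdef]; exact_mod_cast hs1
  have hN0 : (0:ℝ) ≤ N := Nat.cast_nonneg _
  have hAR : (b:ℝ) * ∑ f ∈ 𝒳, ((S.filter fun u => f u = i).card : ℝ) = s * N := by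
    rw [hsdef, hNdef]
    exact_mod_cast congrArg (Nat.cast : ℕ → ℝ) hA
  have hBR : (b:ℝ)^2 * ∑ f ∈ 𝒳, (((S.filter fun u => f u = i).card : ℝ))^2
      = s * ((b:ℝ) * N) + s * ((s - 1) * N) := by
    have := congrArg (Nat.cast : ℕ → ℝ) hB
    push_cast [Nat.cast_sub hs1] at this
    convert this using 2 <;> push_cast <;> ring
  set A : ℝ := ∑ f ∈ 𝒳, ((S.filter fun u => f u = i).card : ℝ) with hAdef
  set B : ℝ := ∑ f ∈ 𝒳, (((S.filter fun u => f u = i).card : ℝ))^2 with hBdef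
  have hexp : ∑ f ∈ 𝒳, (((S.filter fun u => f u = i).card : ℝ) - s / b) ^ 2
      = B - 2 * (s/b) * A + N * (s/b)^2 := by
    have : ∀ f ∈ 𝒳, (((S.filter fun u => f u = i).card : ℝ) - s / b) ^ 2
        = (((S.filter fun u => f u = i).card : ℝ))^2
          - 2 * (s/b) * ((S.filter fun u => f u = i).card : ℝ) + (s/b)^2 := by
      intro f _; ring
    rw [Finset.sum_congr rfl this, Finset.sum_add_distrib, Finset.sum_sub_distrib,
      ← Finset.mul_sum, Finset.sum_const, nsmul_eq_mul, ← hAdef, ← hBdef, ← hNdef]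
  rw [hexp]
  have e1 : B - 2 * (s/b) * A + N * (s/b)^2
      = ((b:ℝ)^2 * B - 2*s*((b:ℝ)*A) + N*s^2) / (b:ℝ)^2 := by
    field_simp
  rw [e1, hBR, hAR]
  rw [div_le_div_iff₀ (by positivity) (by linarith)]
  nlinarith [mul_nonneg (mul_nonneg (by linarith : (0:ℝ) ≤ s) hN0) (by linarith : (0:ℝ) ≤ (b:ℝ))]

theorem stmt18 {V : Type*} [DecidableEq V] (U : Finset V) (n b : ℕ)
    (hU : U.card = n) (hn : 2 ≤ n) (hb : 3 ≤ b)
    (𝒳 : Finset (V → ℕ)) (h𝒳 : 𝒳.Nonempty)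
    (hrange : ∀ f ∈ 𝒳, ∀ u ∈ U, f u ∈ Finset.Icc 1 b)
    (hpi : ∀ u ∈ U, ∀ v ∈ U, u ≠ v → ∀ i ∈ Finset.Icc 1 b, ∀ j ∈ Finset.Icc 1 b,
      b ^ 2 * (𝒳.filter (fun f => f u = i ∧ f v = j)).card = 𝒳.card) :
    ∀ (p : ℕ) (T : Finset V), T ⊆ U → T.card = p →
      ∃ f ∈ 𝒳, ∀ i ∈ Finset.Icc 1 b,
        |((U.filter (fun u => f u = i)).card : ℝ) - (n : ℝ) / (b : ℝ)| ≤
          Real.sqrt n * b ∧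
        |((T.filter (fun u => f u = i)).card : ℝ) - (p : ℝ) / (b : ℝ)| ≤
          Real.sqrt n * b := by
  intro p T hTU hTp
  have hb1 : 1 ≤ b := by omega
  -- marginal distribution
  have hmarg : ∀ u ∈ U, ∀ i ∈ Finset.Icc 1 b,
      b * (𝒳.filter fun f => f u = i).card = 𝒳.card := by
    intro u hu i hi
    obtain ⟨v, hv, hvu⟩ := Finset.exists_mem_ne (by omega : 1 < U.card) u
    have key : (𝒳.filter fun f => f u = i).card
        = ∑ j ∈ Finset.Icc 1 b, ((𝒳.filter fun f => f u = i).filter fun f => f v = j).card :=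
      Finset.card_eq_sum_card_fiberwise (fun f hf => hrange f (Finset.mem_filter.mp hf).1 v hv)
    have key2 : b ^ 2 * (𝒳.filter fun f => f u = i).card = b * 𝒳.card := by
      have hfib : ∀ j ∈ Finset.Icc 1 b,
          b ^ 2 * ((𝒳.filter fun f => f u = i).filter fun f => f v = j).card = 𝒳.card := by
        intro j hj
        rw [Finset.filter_filter]
        exact hpi u hu v hv (Ne.symm hvu) i hi j hj
      calc b ^ 2 * (𝒳.filter fun f => f u = i).card
          = ∑ j ∈ Finset.Icc 1 b,
            b ^ 2 * ((𝒳.filter fun f => f u = i).filter fun f => f v = j).card := by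
            rw [key, Finset.mul_sum]
        _ = ∑ _j ∈ Finset.Icc 1 b, 𝒳.card := Finset.sum_congr rfl hfib
        _ = b * 𝒳.card := by
            rw [Finset.sum_const, smul_eq_mul, Nat.card_Icc, Nat.add_sub_cancel]
    have key3 : b * (b * (𝒳.filter fun f => f u = i).card) = b * 𝒳.card := by
      rw [← key2]; ring
    exact Nat.eq_of_mul_eq_mul_left (lt_of_lt_of_le Nat.zero_lt_one hb1) key3
  -- variance bounds for U and T
  have hsumU : ∀ i ∈ Finset.Icc 1 b,
      ∑ f ∈ 𝒳, (((U.filter fun u => f u = i).card : ℝ) - (n : ℝ) / b) ^ 2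
        ≤ (𝒳.card : ℝ) * n / b := by
    intro i hi
    have := var_le U 𝒳 b i hb1 (fun u hu => hmarg u hu i hi)
      (fun u hu v hv huv => hpi u hu v hv huv i hi i hi)
    rwa [hU] at this
  have hsumT : ∀ i ∈ Finset.Icc 1 b,
      ∑ f ∈ 𝒳, (((T.filter fun u => f u = i).card : ℝ) - (p : ℝ) / b) ^ 2
        ≤ (𝒳.card : ℝ) * p / b := by
    intro i hi
    have := var_le T 𝒳 b i hb1 (fun u hu => hmarg u (hTU hu) i hi)
      (fun u hu v hv huv => hpi u (hTU hu) v (hTU hv) huv i hi i hi)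
    rwa [hTp] at this
  by_contra hcon
  push_neg at hcon
  -- per-function lower bound
  set g : (V → ℕ) → ℝ := fun f => ∑ i ∈ Finset.Icc 1 b,
    ((((U.filter fun u => f u = i).card : ℝ) - (n : ℝ) / b) ^ 2
      + (((T.filter fun u => f u = i).card : ℝ) - (p : ℝ) / b) ^ 2) with hg
  have hnb0 : (0:ℝ) ≤ Real.sqrt n * b := by positivity
  have hlow : ∀ f ∈ 𝒳, (n : ℝ) * b ^ 2 < g f := by
    intro f hf
    obtain ⟨i, hi, hbad⟩ := hcon f hf
    have hterm : (n : ℝ) * b ^ 2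
        < (((U.filter fun u => f u = i).card : ℝ) - (n : ℝ) / b) ^ 2
          + (((T.filter fun u => f u = i).card : ℝ) - (p : ℝ) / b) ^ 2 := by
      have key : ∀ x : ℝ, Real.sqrt n * b < |x| → (n : ℝ) * b ^ 2 < x ^ 2 := by
        intro x hx
        have h1 : (Real.sqrt n * b) ^ 2 < |x| ^ 2 :=
          pow_lt_pow_left₀ hx hnb0 (by norm_num)
        rw [mul_pow, Real.sq_sqrt (Nat.cast_nonneg n), sq_abs] at h1
        exact h1
      by_cases hA : |((U.filter fun u => f u = i).card : ℝ) - (n : ℝ) / b| ≤ Real.sqrt n * b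
      · have := key _ (hbad hA)
        nlinarith [sq_nonneg (((U.filter fun u => f u = i).card : ℝ) - (n : ℝ) / b)]
      · push_neg at hA
        have := key _ hA
        nlinarith [sq_nonneg (((T.filter fun u => f u = i).card : ℝ) - (p : ℝ) / b)]
    calc (n : ℝ) * b ^ 2 < _ := hterm
      _ ≤ g f := Finset.single_le_sum
          (f := fun i => (((U.filter fun u => f u = i).card : ℝ) - (n : ℝ) / b) ^ 2
            + (((T.filter fun u => f u = i).card : ℝ) - (p : ℝ) / b) ^ 2)
          (fun j _ => by positivity) hi
  have hlower : (𝒳.card : ℝ) * ((n : ℝ) * b ^ 2) < ∑ f ∈ 𝒳, g f := by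
    have h1 : ∑ _f ∈ 𝒳, ((n : ℝ) * b ^ 2) < ∑ f ∈ 𝒳, g f :=
      Finset.sum_lt_sum_of_nonempty h𝒳 hlow
    rwa [Finset.sum_const, nsmul_eq_mul] at h1
  -- global upper bound
  have hupper : ∑ f ∈ 𝒳, g f ≤ (𝒳.card : ℝ) * n + (𝒳.card : ℝ) * p := by
    have hswap : ∑ f ∈ 𝒳, g f = ∑ i ∈ Finset.Icc 1 b,
        (∑ f ∈ 𝒳, (((U.filter fun u => f u = i).card : ℝ) - (n : ℝ) / b) ^ 2
          + ∑ f ∈ 𝒳, (((T.filter fun u => f u = i).card : ℝ) - (p : ℝ) / b) ^ 2) := by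
      rw [hg, Finset.sum_comm]
      exact Finset.sum_congr rfl fun i _ => Finset.sum_add_distrib
    rw [hswap]
    calc ∑ i ∈ Finset.Icc 1 b,
        (∑ f ∈ 𝒳, (((U.filter fun u => f u = i).card : ℝ) - (n : ℝ) / b) ^ 2
          + ∑ f ∈ 𝒳, (((T.filter fun u => f u = i).card : ℝ) - (p : ℝ) / b) ^ 2)
        ≤ ∑ i ∈ Finset.Icc 1 b, ((𝒳.card : ℝ) * n / b + (𝒳.card : ℝ) * p / b) :=
          Finset.sum_le_sum fun i hi => add_le_add (hsumU i hi) (hsumT i hi)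
      _ = (𝒳.card : ℝ) * n + (𝒳.card : ℝ) * p := by
          rw [Finset.sum_const, Nat.card_Icc, nsmul_eq_mul]
          have hbne : (b:ℝ) ≠ 0 := by positivity
          have hcard : ((b + 1 - 1 : ℕ) : ℝ) = (b:ℝ) := by norm_num
          rw [hcard]
          field_simp
  -- contradiction
  have hp_le : p ≤ n := by rw [← hTp, ← hU]; exact Finset.card_le_card hTU
  have hN1 : (1:ℝ) ≤ (𝒳.card : ℝ) := by exact_mod_cast Finset.card_pos.mpr h𝒳
  have hnR : (2:ℝ) ≤ (n:ℝ) := by exact_mod_cast hn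
  have hbR : (3:ℝ) ≤ (b:ℝ) := by exact_mod_cast hb
  have hpR : (p:ℝ) ≤ (n:ℝ) := by exact_mod_cast hp_le
  have hN0 : (0:ℝ) ≤ (𝒳.card : ℝ) := by linarith
  have hb2 : (9:ℝ) ≤ (b:ℝ)^2 := by nlinarith
  have h1 : (𝒳.card : ℝ) * (p:ℝ) ≤ (𝒳.card : ℝ) * (n:ℝ) :=
    mul_le_mul_of_nonneg_left hpR hN0
  have h2 : (𝒳.card : ℝ) * (n:ℝ) * 9 ≤ (𝒳.card : ℝ) * (n:ℝ) * (b:ℝ)^2 :=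
    mul_le_mul_of_nonneg_left hb2 (by positivity)
  have h3 : (1:ℝ) * 2 ≤ (𝒳.card : ℝ) * (n:ℝ) :=
    mul_le_mul hN1 hnR (by norm_num) hN0
  nlinarith [hlower, hupper]
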